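/- Let λ, μ, ν be pairwise distinct real numbers and let δ be a self-adjoint endomorphism of V whose eigenspaces for λ, μ, ν have dimensions 1, 2, 4 respectively. Then there exists a unique α ∈ [0, π/2] for which some Cayley triple (u, v, z) satisfies: δ(u) = μ•u, δ(v) = μ•v, δ(x) = ν•x for each x ∈ {uz, vz, (uv)z}, δ(cos α • uv - sin α • z) = λ • (cos α • uv - sin α • z), and δ(sin α • uv + cos α • z) = ν • (sin α • uv + cos α • z). -/

import Mathlib

open scoped RealInnerProductSpace

section helpers
variable {V : Type*} [NormedAddCommGroup V] [InnerProductSpace ℝ V]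

lemma aux_norm_one_of_inner_self {x : V} (h : ⟪x, x⟫ = 1) : ‖x‖ = 1 := by
  have h2 : ‖x‖ ^ 2 = 1 := by rw [← real_inner_self_eq_norm_sq, h]
  nlinarith [norm_nonneg x]

lemma aux_orthonormal_pair {u w : V} (hu : ‖u‖ = 1) (hw : ‖w‖ = 1) (huw : ⟪u, w⟫ = 0) :
    Orthonormal ℝ ![u, w] := by
  constructor
  · intro i; fin_cases i <;> simpa
  · intro i j hij
    fin_cases i <;> fin_cases j <;> simp_all [real_inner_comm u w]

lemma aux_orthonormal_four {a b c d : V} (ha : ‖a‖ = 1) (hb : ‖b‖ = 1) (hc : ‖c‖ = 1)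
    (hd : ‖d‖ = 1) (hab : ⟪a, b⟫ = 0) (hac : ⟪a, c⟫ = 0) (had : ⟪a, d⟫ = 0)
    (hbc : ⟪b, c⟫ = 0) (hbd : ⟪b, d⟫ = 0) (hcd : ⟪c, d⟫ = 0) :
    Orthonormal ℝ ![a, b, c, d] := by
  constructor
  · intro i; fin_cases i <;> simpa
  · intro i j hij
    fin_cases i <;> fin_cases j <;>
      simp_all [real_inner_comm a b, real_inner_comm a c, real_inner_comm a d,
        real_inner_comm b c, real_inner_comm b d, real_inner_comm c d]

lemma aux_vp_neg (p : V →ₗ[ℝ] V →ₗ[ℝ] V) (halt : ∀ x : V, p x x = 0) (x y : V) :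
    p x y = - p y x := by
  have h := halt (x + y)
  simp only [map_add, LinearMap.add_apply, halt] at h
  have h2 : p y x + p x y = 0 := by
    simpa [halt] using h
  linear_combination (norm := module) h2

lemma aux_vp_inner_right (p : V →ₗ[ℝ] V →ₗ[ℝ] V) (halt : ∀ x : V, p x x = 0)
    (hvp : ∀ u v : V, Orthonormal ℝ ![u, v] → Orthonormal ℝ ![u, v, p u v])
    (x y : V) : ⟪p x y, y⟫ = 0 := by
  by_cases hy : y = 0
  · simp [hy]
  set c : ℝ := ⟪x, y⟫ / ⟪y, y⟫ with hc
  set x' : V := x - c • y with hx'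
  have hyy : ⟪y, y⟫ ≠ 0 := by
    rw [real_inner_self_eq_norm_sq]; exact pow_ne_zero 2 (norm_ne_zero_iff.mpr hy)
  have hpx : p x y = p x' y := by
    simp [hx', map_sub, LinearMap.sub_apply, map_smul, LinearMap.smul_apply, halt]
  by_cases hx'0 : x' = 0
  · rw [hpx, hx'0]; simp
  · have hnx' : ‖x'‖ ≠ 0 := norm_ne_zero_iff.mpr hx'0
    have hny : ‖y‖ ≠ 0 := norm_ne_zero_iff.mpr hy
    set u : V := ‖x'‖⁻¹ • x' with hu
    set w : V := ‖y‖⁻¹ • y with hw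
    have hnu : ‖u‖ = 1 := by
      rw [hu, norm_smul]; simp; field_simp
    have hnw : ‖w‖ = 1 := by
      rw [hw, norm_smul]; simp; field_simp
    have hx'y : ⟪x', y⟫ = 0 := by
      rw [hx', inner_sub_left, real_inner_smul_left, hc]
      field_simp
      ring
    have huw : ⟪u, w⟫ = 0 := by
      rw [hu, hw, real_inner_smul_left, real_inner_smul_right, hx'y]; ring
    have hon := hvp u w (aux_orthonormal_pair hnu hnw huw)
    have key : ⟪p u w, w⟫ = 0 := by
      have := hon.2 (show (2 : Fin 3) ≠ 1 by decide)
      simpa using this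
    have hx'e : x' = ‖x'‖ • u := by
      rw [hu, smul_smul]; field_simp; rw [one_smul]
    have hye : y = ‖y‖ • w := by
      rw [hw, smul_smul]; field_simp; rw [one_smul]
    calc ⟪p x y, y⟫ = ⟪p (‖x'‖ • u) (‖y‖ • w), ‖y‖ • w⟫ := by
          rw [hpx, ← hx'e, ← hye]
      _ = ‖x'‖ * ‖y‖ * ‖y‖ * ⟪p u w, w⟫ := by
          simp [map_smul, LinearMap.smul_apply, real_inner_smul_left, real_inner_smul_right]
          ring
      _ = 0 := by rw [key]; ring

lemma aux_vp_swap (p : V →ₗ[ℝ] V →ₗ[ℝ] V) (halt : ∀ x : V, p x x = 0)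
    (hvp : ∀ u v : V, Orthonormal ℝ ![u, v] → Orthonormal ℝ ![u, v, p u v])
    (x y z : V) : ⟪p x y, z⟫ = - ⟪p x z, y⟫ := by
  have h := aux_vp_inner_right p halt hvp x (y + z)
  have hy := aux_vp_inner_right p halt hvp x y
  have hz := aux_vp_inner_right p halt hvp x z
  simp only [map_add, inner_add_left, inner_add_right] at h
  linarith

lemma aux_vp_norm (p : V →ₗ[ℝ] V →ₗ[ℝ] V) (halt : ∀ x : V, p x x = 0)
    (hvp : ∀ u v : V, Orthonormal ℝ ![u, v] → Orthonormal ℝ ![u, v, p u v])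
    (x y : V) : ⟪p x y, p x y⟫ = ⟪x, x⟫ * ⟪y, y⟫ - ⟪x, y⟫ ^ 2 := by
  by_cases hy : y = 0
  · simp [hy]
  set c : ℝ := ⟪x, y⟫ / ⟪y, y⟫ with hc
  set x' : V := x - c • y with hx'
  have hyy : ⟪y, y⟫ ≠ 0 := by
    rw [real_inner_self_eq_norm_sq]; exact pow_ne_zero 2 (norm_ne_zero_iff.mpr hy)
  have hpx : p x y = p x' y := by
    simp [hx', map_sub, LinearMap.sub_apply, map_smul, LinearMap.smul_apply, halt]
  have hx'y : ⟪x', y⟫ = 0 := by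
    rw [hx', inner_sub_left, real_inner_smul_left, hc]; field_simp; ring
  have hxdec : x = x' + c • y := by rw [hx']; abel
  have hyx' : ⟪y, x'⟫ = 0 := by rw [real_inner_comm]; exact hx'y
  have hxx : ⟪x, x⟫ = ⟪x', x'⟫ + c ^ 2 * ⟪y, y⟫ := by
    conv_lhs => rw [hxdec]
    rw [inner_add_left, inner_add_right, inner_add_right, real_inner_smul_left,
      real_inner_smul_left, real_inner_smul_right, real_inner_smul_right, hx'y, hyx']
    ring
  have hxy : ⟪x, y⟫ = c * ⟪y, y⟫ := by
    conv_lhs => rw [hxdec]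
    rw [inner_add_left, real_inner_smul_left, hx'y]; ring
  by_cases hx'0 : x' = 0
  · rw [hpx, hx'0]
    simp only [map_zero, LinearMap.zero_apply, inner_zero_left]
    rw [hxx, hxy, hx'0, inner_zero_left]; ring
  · have hnx' : ‖x'‖ ≠ 0 := norm_ne_zero_iff.mpr hx'0
    have hny : ‖y‖ ≠ 0 := norm_ne_zero_iff.mpr hy
    set u : V := ‖x'‖⁻¹ • x' with hu
    set w : V := ‖y‖⁻¹ • y with hw
    have hnu : ‖u‖ = 1 := by rw [hu, norm_smul]; simp; field_simp
    have hnw : ‖w‖ = 1 := by rw [hw, norm_smul]; simp; field_simp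
    have huw : ⟪u, w⟫ = 0 := by
      rw [hu, hw, real_inner_smul_left, real_inner_smul_right, hx'y]; ring
    have hon := hvp u w (aux_orthonormal_pair hnu hnw huw)
    have key : ⟪p u w, p u w⟫ = 1 := by
      have h1 : ‖p u w‖ = 1 := hon.1 2
      rw [real_inner_self_eq_norm_sq, h1]; norm_num
    have hx'e : x' = ‖x'‖ • u := by rw [hu, smul_smul]; field_simp; rw [one_smul]
    have hye : y = ‖y‖ • w := by rw [hw, smul_smul]; field_simp; rw [one_smul]
    have hx'x' : ⟪x', x'⟫ = ‖x'‖ ^ 2 := real_inner_self_eq_norm_sq x'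
    have hyy2 : ⟪y, y⟫ = ‖y‖ ^ 2 := real_inner_self_eq_norm_sq y
    have hL : ⟪p x y, p x y⟫ = ‖x'‖ ^ 2 * ‖y‖ ^ 2 := by
      calc ⟪p x y, p x y⟫ = ⟪p (‖x'‖ • u) (‖y‖ • w), p (‖x'‖ • u) (‖y‖ • w)⟫ := by
            rw [hpx, ← hx'e, ← hye]
        _ = ‖x'‖ ^ 2 * ‖y‖ ^ 2 * ⟪p u w, p u w⟫ := by
            simp [map_smul, LinearMap.smul_apply, real_inner_smul_left, real_inner_smul_right]
            rw [norm_smul, norm_smul, norm_norm, norm_norm]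
            ring
        _ = ‖x'‖ ^ 2 * ‖y‖ ^ 2 := by rw [key]; ring
    rw [hL, hxx, hxy, hx'x', hyy2]; ring

lemma aux_vp_inner_vp (p : V →ₗ[ℝ] V →ₗ[ℝ] V) (halt : ∀ x : V, p x x = 0)
    (hvp : ∀ u v : V, Orthonormal ℝ ![u, v] → Orthonormal ℝ ![u, v, p u v])
    (x y z : V) : ⟪p x y, p x z⟫ = ⟪x, x⟫ * ⟪y, z⟫ - ⟪x, y⟫ * ⟪x, z⟫ := by
  have h := aux_vp_norm p halt hvp x (y + z)
  have hy := aux_vp_norm p halt hvp x y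
  have hz := aux_vp_norm p halt hvp x z
  simp only [map_add, inner_add_left, inner_add_right] at h
  have hsym : ⟪p x z, p x y⟫ = ⟪p x y, p x z⟫ := real_inner_comm _ _
  have hsy : ⟪z, y⟫ = ⟪y, z⟫ := real_inner_comm y z
  rw [hsym, hsy] at h
  linear_combination (h - hy - hz) / 2

lemma aux_vp_xxy (p : V →ₗ[ℝ] V →ₗ[ℝ] V) (halt : ∀ x : V, p x x = 0)
    (hvp : ∀ u v : V, Orthonormal ℝ ![u, v] → Orthonormal ℝ ![u, v, p u v])
    (x y w : V) : ⟪p x (p x y), w⟫ = ⟪x, w⟫ * ⟪x, y⟫ - ⟪x, x⟫ * ⟪w, y⟫ := by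
  rw [aux_vp_swap p halt hvp x (p x y) w]
  rw [show ⟪p x w, p x y⟫ = ⟪x, x⟫ * ⟪w, y⟫ - ⟪x, w⟫ * ⟪x, y⟫ from
    aux_vp_inner_vp p halt hvp x w y]
  ring

lemma aux_eig_orth {δ : V →ₗ[ℝ] V} (hδ : LinearMap.IsSymmetric δ) {a b : ℝ} (hab : a ≠ b)
    {x y : V} (hx : δ x = a • x) (hy : δ y = b • y) : ⟪x, y⟫ = 0 := by
  have h := hδ x y
  rw [hx, hy, real_inner_smul_left, real_inner_smul_right] at h
  have h2 : (a - b) * ⟪x, y⟫ = 0 := by linarith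
  rcases mul_eq_zero.mp h2 with h' | h'
  · exact absurd (by linarith : a = b) hab
  · exact h'

lemma aux_orthonormal_three {a b c : V} (ha : ‖a‖ = 1) (hb : ‖b‖ = 1) (hc : ‖c‖ = 1)
    (hab : ⟪a, b⟫ = 0) (hac : ⟪a, c⟫ = 0) (hbc : ⟪b, c⟫ = 0) :
    Orthonormal ℝ ![a, b, c] := by
  constructor
  · intro i; fin_cases i <;> simpa
  · intro i j hij
    fin_cases i <;> fin_cases j <;>
      simp_all [real_inner_comm a b, real_inner_comm a c, real_inner_comm b c]

lemma aux_vp_inner_left (p : V →ₗ[ℝ] V →ₗ[ℝ] V) (halt : ∀ x : V, p x x = 0)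
    (hvp : ∀ u v : V, Orthonormal ℝ ![u, v] → Orthonormal ℝ ![u, v, p u v])
    (x y : V) : ⟪p x y, x⟫ = 0 := by
  rw [aux_vp_neg p halt x y, inner_neg_left, aux_vp_inner_right p halt hvp y x, neg_zero]

end helpers

set_option maxHeartbeats 1000000 in
theorem stmt11
    {V : Type*} [NormedAddCommGroup V] [InnerProductSpace ℝ V]
    [FiniteDimensional ℝ V] (hdim : Module.finrank ℝ V = 7)
    (π : V →ₗ[ℝ] V →ₗ[ℝ] V) (hπalt : ∀ x : V, π x x = 0)
    (hπvp : ∀ u v : V, Orthonormal ℝ ![u, v] → Orthonormal ℝ ![u, v, π u v])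
    (lam μ ν : ℝ) (hlm : lam ≠ μ) (hln : lam ≠ ν) (hmn : μ ≠ ν)
    (δ : V →ₗ[ℝ] V) (hδ : LinearMap.IsSymmetric δ)
    (h1 : Module.finrank ℝ (Module.End.eigenspace δ lam) = 1)
    (h2 : Module.finrank ℝ (Module.End.eigenspace δ μ) = 2)
    (h4 : Module.finrank ℝ (Module.End.eigenspace δ ν) = 4) :
    ∃! α : ℝ, α ∈ Set.Icc (0 : ℝ) (Real.pi / 2) ∧ ∃ u v z : V,
      Orthonormal ℝ ![u, v, π u v, z] ∧
      δ u = μ • u ∧ δ v = μ • v ∧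
      δ (π u z) = ν • π u z ∧ δ (π v z) = ν • π v z ∧
      δ (π (π u v) z) = ν • π (π u v) z ∧
      δ (Real.cos α • π u v - Real.sin α • z) =
        lam • (Real.cos α • π u v - Real.sin α • z) ∧
      δ (Real.sin α • π u v + Real.cos α • z) =
        ν • (Real.sin α • π u v + Real.cos α • z) := by
  classical
  set EL := Module.End.eigenspace δ lam with hELdef
  set EM := Module.End.eigenspace δ μ with hEMdef
  set EN := Module.End.eigenspace δ ν with hENdef
  -- orthonormal basis of EM
  obtain ⟨u, v, hu1, hv1, huv, huE, hvE, hEMspan⟩ :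
      ∃ u v : V, ‖u‖ = 1 ∧ ‖v‖ = 1 ∧ ⟪u, v⟫ = 0 ∧ δ u = μ • u ∧ δ v = μ • v ∧
        EM = Submodule.span ℝ {u, v} := by
    let bμ : OrthonormalBasis (Fin 2) ℝ EM := (stdOrthonormalBasis ℝ EM).reindex (finCongr h2)
    have hu1 : ‖(bμ 0 : V)‖ = 1 := by
      have := bμ.orthonormal.1 0
      exact this
    have hv1 : ‖(bμ 1 : V)‖ = 1 := by
      have := bμ.orthonormal.1 1
      exact this
    have huv : ⟪(bμ 0 : V), (bμ 1 : V)⟫ = 0 := by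
      have := bμ.orthonormal.2 (show (0 : Fin 2) ≠ 1 by decide)
      exact this
    refine ⟨bμ 0, bμ 1, hu1, hv1, huv,
      Module.End.mem_eigenspace_iff.mp (bμ 0).2,
      Module.End.mem_eigenspace_iff.mp (bμ 1).2, ?_⟩
    refine (Submodule.eq_of_le_of_finrank_eq ?_ ?_).symm
    · rw [Submodule.span_le]
      rintro y hy
      rcases hy with rfl | hy
      · exact (bμ 0).2
      · rcases hy with rfl
        exact (bμ 1).2
    · have hr : Set.range ![(bμ 0 : V), (bμ 1 : V)] = {(bμ 0 : V), (bμ 1 : V)} := by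
        simp only [Matrix.range_cons, Matrix.range_empty, Set.union_singleton,
          Set.union_empty]
        exact Set.pair_comm _ _
      rw [← hr, finrank_span_eq_card (aux_orthonormal_pair hu1 hv1 huv).linearIndependent, h2]
      simp
  have hvu : ⟪v, u⟫ = 0 := by rw [real_inner_comm]; exact huv
  have hon3 := hπvp u v (aux_orthonormal_pair hu1 hv1 huv)
  have hn1 : ‖π u v‖ = 1 := by
    have := hon3.1 2; simpa using this
  have hun : ⟪u, π u v⟫ = 0 := by
    have := hon3.2 (show (0 : Fin 3) ≠ 2 by decide); simpa using this
  have hvn : ⟪v, π u v⟫ = 0 := by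
    have := hon3.2 (show (1 : Fin 3) ≠ 2 by decide); simpa using this
  obtain ⟨e, he1, heE, ht0⟩ : ∃ e : V, ‖e‖ = 1 ∧ δ e = lam • e ∧ 0 ≤ ⟪e, π u v⟫ := by
    let bL : OrthonormalBasis (Fin 1) ℝ EL := (stdOrthonormalBasis ℝ EL).reindex (finCongr h1)
    set e0 : V := (bL 0 : V) with he0def
    have he01 : ‖e0‖ = 1 := by
      have := bL.orthonormal.1 0; exact this
    have he0E : δ e0 = lam • e0 := Module.End.mem_eigenspace_iff.mp (bL 0).2
    rcases le_or_gt 0 ⟪e0, π u v⟫ with h | h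
    · exact ⟨e0, he01, he0E, h⟩
    · refine ⟨-e0, by simpa using he01, by simp [he0E], ?_⟩
      rw [inner_neg_left]; linarith
  set t : ℝ := ⟪e, π u v⟫ with htdef
  have ht1 : t ≤ 1 := by
    have := abs_real_inner_le_norm e (π u v)
    rw [he1, hn1] at this
    calc t ≤ |t| := le_abs_self t
      _ ≤ 1 := by simpa [htdef] using this
  set s : ℝ := Real.sqrt (1 - t ^ 2) with hsdef
  have hs0 : 0 ≤ s := Real.sqrt_nonneg _
  have hs2 : s ^ 2 = 1 - t ^ 2 := Real.sq_sqrt (by nlinarith)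
  set α : ℝ := Real.arccos t with hαdef
  have hcosα : Real.cos α = t := Real.cos_arccos (by linarith) ht1
  have hsinα : Real.sin α = s := by rw [hαdef, Real.sin_arccos]
  have hαmem : α ∈ Set.Icc (0 : ℝ) (Real.pi / 2) :=
    ⟨Real.arccos_nonneg t, Real.arccos_le_pi_div_two.mpr ht0⟩
  have heu : ⟪e, u⟫ = 0 := aux_eig_orth hδ hlm heE huE
  have hev : ⟪e, v⟫ = 0 := aux_eig_orth hδ hlm heE hvE
  have hue : ⟪u, e⟫ = 0 := by rw [real_inner_comm]; exact heu
  have hve : ⟪v, e⟫ = 0 := by rw [real_inner_comm]; exact hev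
  have huu : ⟪u, u⟫ = 1 := by rw [real_inner_self_eq_norm_sq, hu1]; norm_num
  have hvv : ⟪v, v⟫ = 1 := by rw [real_inner_self_eq_norm_sq, hv1]; norm_num
  have hnn : ⟪π u v, π u v⟫ = 1 := by rw [real_inner_self_eq_norm_sq, hn1]; norm_num
  have hee : ⟪e, e⟫ = 1 := by rw [real_inner_self_eq_norm_sq, he1]; norm_num
  have hne : ⟪π u v, e⟫ = t := by rw [real_inner_comm]
  -- the z vector
  obtain ⟨z, hz1, hzu, hzv, hzn, hez⟩ :
      ∃ z : V, ‖z‖ = 1 ∧ ⟪u, z⟫ = 0 ∧ ⟪v, z⟫ = 0 ∧ ⟪π u v, z⟫ = 0 ∧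
        e = t • π u v - s • z := by
    by_cases hts : t = 1
    · have hs00 : s = 0 := by rw [hsdef, hts]; simp
      have hen : e = π u v := by
        have h0 : ⟪e - π u v, e - π u v⟫ = 0 := by
          rw [inner_sub_left, inner_sub_right, inner_sub_right, hee, hne, hnn,
            real_inner_comm (π u v) e, hne, hts]; ring
        have := inner_self_eq_zero.mp h0
        rwa [sub_eq_zero] at this
      have hpos : 0 < Module.finrank ℝ EN := by rw [h4]; norm_num
      obtain ⟨x, hx⟩ := Module.finrank_pos_iff_exists_ne_zero.mp hpos
      have hxV : (x : V) ≠ 0 := fun h => hx (Subtype.ext h)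
      set z : V := ‖(x : V)‖⁻¹ • (x : V) with hzdef
      have hzE : δ z = ν • z := by
        have hxe : δ (x : V) = ν • (x : V) := Module.End.mem_eigenspace_iff.mp x.2
        rw [hzdef, map_smul, hxe, smul_comm]
      have hz1 : ‖z‖ = 1 := by
        rw [hzdef, norm_smul]; simp; field_simp [norm_ne_zero_iff.mpr hxV]
      refine ⟨z, hz1, aux_eig_orth hδ hmn huE hzE, aux_eig_orth hδ hmn hvE hzE, ?_, ?_⟩
      · rw [← hen]; exact aux_eig_orth hδ hln heE hzE
      · rw [hts, hs00, hen]; simp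
    · have htlt : t < 1 := lt_of_le_of_ne ht1 hts
      have hspos : 0 < s := Real.sqrt_pos.mpr (by nlinarith)
      have hsne : s ≠ 0 := ne_of_gt hspos
      refine ⟨s⁻¹ • (t • π u v - e), ?_, ?_, ?_, ?_, ?_⟩
      · apply aux_norm_one_of_inner_self
        have hw0 : ⟪t • π u v - e, t • π u v - e⟫ = s ^ 2 := by
          simp only [inner_sub_left, inner_sub_right, real_inner_smul_left,
            real_inner_smul_right]
          rw [hnn, hne, hee, ← htdef]
          linear_combination -hs2
        rw [real_inner_smul_left, real_inner_smul_right, hw0, hs2]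
        have : s * s = 1 - t ^ 2 := by linear_combination hs2
        field_simp
        linarith [this]
      · rw [real_inner_smul_right, inner_sub_right, real_inner_smul_right, hun, hue]; ring
      · rw [real_inner_smul_right, inner_sub_right, real_inner_smul_right, hvn, hve]; ring
      · rw [real_inner_smul_right, inner_sub_right, real_inner_smul_right, hnn, hne]; ring
      · rw [smul_smul, mul_inv_cancel₀ hsne, one_smul]; abel
  have hzz : ⟪z, z⟫ = 1 := by rw [real_inner_self_eq_norm_sq, hz1]; norm_num
  have huz : ⟪u, z⟫ = 0 := hzu
  -- membership criterion for EN
  have hmemν : ∀ w : V, ⟪u, w⟫ = 0 → ⟪v, w⟫ = 0 → ⟪e, w⟫ = 0 → δ w = ν • w := by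
    have honuve : Orthonormal ℝ ![u, v, e] := aux_orthonormal_three hu1 hv1 he1 huv hue hve
    set K : Submodule ℝ V := Submodule.span ℝ (Set.range ![u, v, e]) with hK
    have hKrank : Module.finrank ℝ K = 3 := by
      rw [hK, finrank_span_eq_card honuve.linearIndependent]
      simp
    have hle : EN ≤ Kᗮ := by
      intro x hx
      have hxE : δ x = ν • x := Module.End.mem_eigenspace_iff.mp hx
      rw [Submodule.mem_orthogonal]
      intro k hk
      induction hk using Submodule.span_induction with
      | mem y hy =>
          obtain ⟨i, rfl⟩ := hy
          fin_cases i
          · exact aux_eig_orth hδ hmn huE hxE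
          · exact aux_eig_orth hδ hmn hvE hxE
          · exact aux_eig_orth hδ hln heE hxE
      | zero => simp
      | add a b _ _ ha hb => rw [inner_add_left, ha, hb]; ring
      | smul r a _ ha => rw [real_inner_smul_left, ha]; ring
    have hKorth : Module.finrank ℝ (Kᗮ) = 4 := by
      have hsum := Submodule.finrank_add_finrank_orthogonal K
      rw [hdim, hKrank] at hsum; omega
    have hEN : EN = Kᗮ := Submodule.eq_of_le_of_finrank_eq hle (by rw [h4, hKorth])
    intro w h1w h2w h3w
    have hwK : w ∈ Kᗮ := by
      rw [Submodule.mem_orthogonal]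
      intro k hk
      induction hk using Submodule.span_induction with
      | mem y hy =>
          obtain ⟨i, rfl⟩ := hy
          fin_cases i
          · exact h1w
          · exact h2w
          · exact h3w
      | zero => simp
      | add a b _ _ ha hb => rw [inner_add_left, ha, hb]; ring
      | smul r a _ ha => rw [real_inner_smul_left, ha]; ring
    have : w ∈ EN := hEN ▸ hwK
    exact Module.End.mem_eigenspace_iff.mp this
  have honuvnz : Orthonormal ℝ ![u, v, π u v, z] :=
    aux_orthonormal_four hu1 hv1 hn1 hz1 huv hun hzu hvn hzv hzn
  -- the eigen conditions
  have hδuz : δ (π u z) = ν • π u z := by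
    refine hmemν _ ?_ ?_ ?_
    · rw [real_inner_comm]; exact aux_vp_inner_left π hπalt hπvp u z
    · rw [real_inner_comm, aux_vp_swap π hπalt hπvp u z v, hzn]; ring
    · rw [hez, inner_sub_left, real_inner_smul_left, real_inner_smul_left]
      have hA : ⟪π u v, π u z⟫ = 0 := by
        rw [aux_vp_inner_vp π hπalt hπvp u v z, hzv, hzu]; ring
      have hB : ⟪z, π u z⟫ = 0 := by
        rw [real_inner_comm]; exact aux_vp_inner_right π hπalt hπvp u z
      rw [hA, hB]; ring
  have hδvz : δ (π v z) = ν • π v z := by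
    refine hmemν _ ?_ ?_ ?_
    · rw [real_inner_comm, aux_vp_swap π hπalt hπvp v z u, aux_vp_neg π hπalt v u,
        inner_neg_left, hzn]; ring
    · rw [real_inner_comm]; exact aux_vp_inner_left π hπalt hπvp v z
    · rw [hez, inner_sub_left, real_inner_smul_left, real_inner_smul_left]
      have hA : ⟪π u v, π v z⟫ = 0 := by
        rw [aux_vp_neg π hπalt u v, inner_neg_left,
          aux_vp_inner_vp π hπalt hπvp v u z, hzu, hzv]; ring
      have hB : ⟪z, π v z⟫ = 0 := by
        rw [real_inner_comm]; exact aux_vp_inner_right π hπalt hπvp v z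
      rw [hA, hB]; ring
  have hδnz : δ (π (π u v) z) = ν • π (π u v) z := by
    refine hmemν _ ?_ ?_ ?_
    · rw [real_inner_comm, aux_vp_swap π hπalt hπvp (π u v) z u,
        aux_vp_neg π hπalt (π u v) u, inner_neg_left,
        aux_vp_xxy π hπalt hπvp u v z, huz, huv, huu, real_inner_comm v z, hzv]
      ring
    · rw [real_inner_comm, aux_vp_swap π hπalt hπvp (π u v) z v,
        aux_vp_neg π hπalt (π u v) v, inner_neg_left]
      have : π v (π u v) = - π v (π v u) := by
        rw [aux_vp_neg π hπalt u v, map_neg]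
      rw [this, inner_neg_left, aux_vp_xxy π hπalt hπvp v u z, hzv, hvu, hvv,
        real_inner_comm u z, hzu]
      ring
    · rw [hez, inner_sub_left, real_inner_smul_left, real_inner_smul_left]
      have hA : ⟪π u v, π (π u v) z⟫ = 0 := by
        rw [real_inner_comm]; exact aux_vp_inner_left π hπalt hπvp (π u v) z
      have hB : ⟪z, π (π u v) z⟫ = 0 := by
        rw [real_inner_comm]; exact aux_vp_inner_right π hπalt hπvp (π u v) z
      rw [hA, hB]; ring
  have hδw : δ (Real.cos α • π u v - Real.sin α • z) =
      lam • (Real.cos α • π u v - Real.sin α • z) := by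
    rw [hcosα, hsinα, ← hez]; exact heE
  have hδy : δ (Real.sin α • π u v + Real.cos α • z) =
      ν • (Real.sin α • π u v + Real.cos α • z) := by
    rw [hsinα, hcosα]
    refine hmemν _ ?_ ?_ ?_
    · rw [inner_add_right, real_inner_smul_right, real_inner_smul_right, hun, huz]; ring
    · rw [inner_add_right, real_inner_smul_right, real_inner_smul_right, hvn, hzv]; ring
    · rw [hez]
      simp only [inner_sub_left, inner_add_right, real_inner_smul_left, real_inner_smul_right]
      rw [hnn, hzn, hzz, real_inner_comm (π u v) z, hzn]
      ring
  refine ⟨α, ⟨hαmem, u, v, z, honuvnz, huE, hvE, hδuz, hδvz, hδnz, hδw, hδy⟩, ?_⟩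
  -- uniqueness
  rintro β ⟨⟨hβ0, hβ2⟩, u', v', z', hon', hu'E, hv'E, -, -, -, hw'E, -⟩
  have hnu' : ‖u'‖ = 1 := by simpa using hon'.1 0
  have hnv' : ‖v'‖ = 1 := by simpa using hon'.1 1
  have hnp' : ‖π u' v'‖ = 1 := by simpa using hon'.1 2
  have hnz' : ‖z'‖ = 1 := by simpa using hon'.1 3
  have hu'v' : ⟪u', v'⟫ = 0 := by
    simpa using hon'.2 (show (0 : Fin 4) ≠ 1 by decide)
  have hp'z' : ⟪π u' v', z'⟫ = 0 := by
    simpa using hon'.2 (show (2 : Fin 4) ≠ 3 by decide)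
  have hu'mem : u' ∈ Submodule.span ℝ {u, v} := by
    rw [← hEMspan]; exact Module.End.mem_eigenspace_iff.mpr hu'E
  have hv'mem : v' ∈ Submodule.span ℝ {u, v} := by
    rw [← hEMspan]; exact Module.End.mem_eigenspace_iff.mpr hv'E
  obtain ⟨a, b, hab⟩ := Submodule.mem_span_pair.mp hu'mem
  obtain ⟨c, d, hcd⟩ := Submodule.mem_span_pair.mp hv'mem
  -- π u' v' = (ad - bc) • π u v
  have hpuv' : π u' v' = (a * d - b * c) • π u v := by
    rw [← hab, ← hcd]
    have expand : π (a • u + b • v) (c • u + d • v)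
        = (a * c) • π u u + (a * d) • π u v + (b * c) • π v u + (b * d) • π v v := by
      simp only [map_add, map_smul, LinearMap.add_apply, LinearMap.smul_apply, smul_smul]
      module
    rw [expand, hπalt, hπalt, aux_vp_neg π hπalt v u]
    module
  -- scalar relations
  have hinner_uu' : ⟪u', u'⟫ = 1 := by rw [real_inner_self_eq_norm_sq, hnu']; norm_num
  have hinner_vv' : ⟪v', v'⟫ = 1 := by rw [real_inner_self_eq_norm_sq, hnv']; norm_num
  have ha2 : a ^ 2 + b ^ 2 = 1 := by
    have h := hinner_uu'
    rw [← hab] at h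
    simp only [inner_add_left, inner_add_right, real_inner_smul_left,
      real_inner_smul_right, huu, hvv, huv, hvu] at h
    linear_combination h
  have hc2 : c ^ 2 + d ^ 2 = 1 := by
    have h := hinner_vv'
    rw [← hcd] at h
    simp only [inner_add_left, inner_add_right, real_inner_smul_left,
      real_inner_smul_right, huu, hvv, huv, hvu] at h
    linear_combination h
  have hacbd : a * c + b * d = 0 := by
    have h := hu'v'
    rw [← hab, ← hcd] at h
    simp only [inner_add_left, inner_add_right, real_inner_smul_left,
      real_inner_smul_right, huu, hvv, huv, hvu] at h
    linear_combination h
  have hD2 : (a * d - b * c) ^ 2 = 1 := by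
    linear_combination (c ^ 2 + d ^ 2) * ha2 + hc2 - (a * c + b * d) * hacbd
  -- EL is spanned by e
  have hene0 : e ≠ 0 := by
    intro h; rw [h, norm_zero] at he1; exact zero_ne_one he1
  have hELspan : EL = Submodule.span ℝ {e} := by
    refine (Submodule.eq_of_le_of_finrank_eq ?_ ?_).symm
    · rw [Submodule.span_le, Set.singleton_subset_iff]
      exact Module.End.mem_eigenspace_iff.mpr heE
    · rw [finrank_span_singleton hene0, h1]
  have hw'mem : Real.cos β • π u' v' - Real.sin β • z' ∈ Submodule.span ℝ {e} := by
    rw [← hELspan]; exact Module.End.mem_eigenspace_iff.mpr hw'E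
  obtain ⟨r, hr⟩ := Submodule.mem_span_singleton.mp hw'mem
  have hr2 : r ^ 2 = 1 := by
    have hw1 : ⟪Real.cos β • π u' v' - Real.sin β • z',
        Real.cos β • π u' v' - Real.sin β • z'⟫ = 1 := by
      simp only [inner_sub_left, inner_sub_right, real_inner_smul_left,
        real_inner_smul_right]
      rw [real_inner_self_eq_norm_sq, hnp', real_inner_self_eq_norm_sq, hnz', hp'z',
        real_inner_comm (π u' v') z', hp'z']
      have hsc := Real.sin_sq_add_cos_sq β
      linear_combination hsc
    rw [← hr, real_inner_smul_left, real_inner_smul_right, hee] at hw1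
    linear_combination hw1
  have hcosβ : Real.cos β = (r * (a * d - b * c)) * t := by
    have hL : ⟪Real.cos β • π u' v' - Real.sin β • z', π u' v'⟫ = Real.cos β := by
      rw [inner_sub_left, real_inner_smul_left, real_inner_smul_left,
        real_inner_self_eq_norm_sq, hnp', real_inner_comm (π u' v') z', hp'z']
      ring
    rw [← hr, hpuv', real_inner_smul_left, real_inner_smul_right, ← htdef] at hL
    rw [← hL]; ring
  have hcosβ0 : 0 ≤ Real.cos β :=
    Real.cos_nonneg_of_mem_Icc ⟨by linarith [Real.pi_pos], hβ2⟩
  have hrD2 : (r * (a * d - b * c)) * (r * (a * d - b * c)) = 1 := by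
    linear_combination (a * d - b * c) ^ 2 * hr2 + hD2
  have hcβt : Real.cos β = t := by
    rcases mul_self_eq_one_iff.mp hrD2 with h | h
    · rw [hcosβ, h]; ring
    · have hneg : Real.cos β = -t := by rw [hcosβ, h]; ring
      linarith [hcosβ0, ht0]
  have hβπ : β ∈ Set.Icc (0 : ℝ) Real.pi := ⟨hβ0, by linarith [Real.pi_pos]⟩
  have hαπ : α ∈ Set.Icc (0 : ℝ) Real.pi :=
    ⟨hαmem.1, by linarith [Real.pi_pos, hαmem.2]⟩
  exact Real.injOn_cos hβπ hαπ (by rw [hcβt, hcosα])
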